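/- Let I ⊂ ℂ be a compact line segment and let g, h be functions analytic on an open neighborhood of I with |h(z)| < |g(z)| for all z ∈ I. Then |Im(∫_I (g'+h')/(g+h) dz − ∫_I g'/g dz)| < π, where the integrals are complex line integrals along I. -/

import Mathlib

noncomputable section

private lemma aux_div (a b a' b' w : ℂ) (ha : a ≠ 0) (hab : a + b ≠ 0) :
    ((a' * w + b' * w) * a - (a + b) * (a' * w)) / a ^ 2 / ((a + b) / a)
      = (a' + b') / (a + b) * w - a' / a * w := by
  field_simp


/-- if `|h| < |g|` on a compact segment `I` from `p` to `q`, the imaginary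
parts of the logarithmic-derivative integrals of `g + h` and `g` along `I` differ by
less than `π`.  The line integrals are written via the parametrization
`s ↦ (1-s)•p + s•q`, `dz = (q-p) ds`. -/
theorem im_log_deriv_integral_diff_lt_pi (p q : ℂ) (hpq : p ≠ q)
    (U : Set ℂ) (hU : IsOpen U) (hseg : segment ℝ p q ⊆ U)
    (g g' h h' : ℂ → ℂ)
    (hg : ∀ z ∈ U, HasDerivAt g (g' z) z)
    (hh : ∀ z ∈ U, HasDerivAt h (h' z) z)
    (hlt : ∀ z ∈ segment ℝ p q, ‖h z‖ < ‖g z‖) :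
    |((∫ s in (0:ℝ)..1,
        ((g' ((1 - s) • p + s • q) + h' ((1 - s) • p + s • q)) /
          (g ((1 - s) • p + s • q) + h ((1 - s) • p + s • q))) * (q - p)) -
      (∫ s in (0:ℝ)..1,
        (g' ((1 - s) • p + s • q) / g ((1 - s) • p + s • q)) * (q - p))).im|
      < Real.pi := by
  set c : ℝ → ℂ := fun s => (1 - s) • p + s • q with hc
  have hccont : Continuous c := by fun_prop
  have hcd : ∀ s : ℝ, HasDerivAt c (q - p) s := by
    intro s
    have h1 : HasDerivAt (fun s : ℝ => (1 - s) • p + s • q)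
        (((0:ℝ) - 1) • p + (1:ℝ) • q) s :=
      (((hasDerivAt_const s (1:ℝ)).sub (hasDerivAt_id s)).smul_const p).add
        ((hasDerivAt_id s).smul_const q)
    have h2 : ((0:ℝ) - 1) • p + (1:ℝ) • q = q - p := by
      simp [zero_sub, neg_smul, one_smul]
      abel
    rw [h2] at h1
    exact h1
  have hmem : ∀ s ∈ Set.Icc (0:ℝ) 1, c s ∈ segment ℝ p q := by
    intro s hs
    refine ⟨1 - s, s, by linarith [hs.2], hs.1, by ring, rfl⟩
  have hg0 : ∀ z ∈ segment ℝ p q, g z ≠ 0 := by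
    intro z hz h0
    have := hlt z hz
    simp [h0] at this
    exact (norm_nonneg _).not_gt this
  have hgh0 : ∀ z ∈ segment ℝ p q, g z + h z ≠ 0 := by
    intro z hz h0
    have h1 : h z = -g z := by linear_combination h0
    have := hlt z hz
    rw [h1, norm_neg] at this
    exact lt_irrefl _ this
  have hrepos : ∀ z ∈ segment ℝ p q, 0 < ((g z + h z) / g z).re := by
    intro z hz
    have hg0' := hg0 z hz
    have key : (g z + h z) / g z = 1 + h z / g z := by field_simp
    rw [key]
    have habs : ‖h z / g z‖ < 1 := by
      rw [norm_div, div_lt_one (norm_pos_iff.mpr hg0')]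
      exact hlt z hz
    have hre : -(‖h z / g z‖) ≤ (h z / g z).re :=
      (abs_le.mp (Complex.abs_re_le_norm _)).1
    simp only [Complex.add_re, Complex.one_re]
    linarith
  have hslit : ∀ z ∈ segment ℝ p q, (g z + h z) / g z ∈ Complex.slitPlane :=
    fun z hz => Complex.mem_slitPlane_iff.mpr (Or.inl (hrepos z hz))
  have hgdiff : DifferentiableOn ℂ g U := fun z hz =>
    (hg z hz).differentiableAt.differentiableWithinAt
  have hhdiff : DifferentiableOn ℂ h U := fun z hz =>
    (hh z hz).differentiableAt.differentiableWithinAt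
  have hg'cont : ContinuousOn g' U :=
    ((hgdiff.analyticOnNhd hU).deriv).continuousOn.congr
      fun z hz => ((hg z hz).deriv).symm
  have hh'cont : ContinuousOn h' U :=
    ((hhdiff.analyticOnNhd hU).deriv).continuousOn.congr
      fun z hz => ((hh z hz).deriv).symm
  have hgcont : ContinuousOn g U := hgdiff.continuousOn
  have hhcont : ContinuousOn h U := hhdiff.continuousOn
  have hcmaps : Set.MapsTo c (Set.Icc (0:ℝ) 1) U := fun s hs => hseg (hmem s hs)
  set A : ℝ → ℂ := fun s => ((g' (c s) + h' (c s)) / (g (c s) + h (c s))) * (q - p) with hA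
  set B : ℝ → ℂ := fun s => (g' (c s) / g (c s)) * (q - p) with hB
  have hccont' : ContinuousOn c (Set.Icc (0:ℝ) 1) := hccont.continuousOn
  have hAcont : ContinuousOn A (Set.Icc (0:ℝ) 1) := by
    apply ContinuousOn.mul _ continuousOn_const
    apply ContinuousOn.div
    · exact (hg'cont.comp hccont' hcmaps).add (hh'cont.comp hccont' hcmaps)
    · exact (hgcont.comp hccont' hcmaps).add (hhcont.comp hccont' hcmaps)
    · intro s hs; exact hgh0 _ (hmem s hs)
  have hBcont : ContinuousOn B (Set.Icc (0:ℝ) 1) := by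
    apply ContinuousOn.mul _ continuousOn_const
    apply ContinuousOn.div
    · exact hg'cont.comp hccont' hcmaps
    · exact hgcont.comp hccont' hcmaps
    · intro s hs; exact hg0 _ (hmem s hs)
  have hIccuIcc : Set.uIcc (0:ℝ) 1 = Set.Icc 0 1 := Set.uIcc_of_le zero_le_one
  have hAint : IntervalIntegrable A MeasureTheory.volume 0 1 :=
    (hAcont.mono (le_of_eq hIccuIcc)).intervalIntegrable
  have hBint : IntervalIntegrable B MeasureTheory.volume 0 1 :=
    (hBcont.mono (le_of_eq hIccuIcc)).intervalIntegrable
  set F : ℝ → ℂ := fun s => Complex.log ((g (c s) + h (c s)) / g (c s)) with hF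
  have hder : ∀ s ∈ Set.uIcc (0:ℝ) 1, HasDerivAt F (A s - B s) s := by
    intro s hs
    rw [hIccuIcc] at hs
    have hz := hmem s hs
    have hzU := hseg hz
    have hgz := (hg _ hzU).comp s (hcd s)
    have hhz := (hh _ hzU).comp s (hcd s)
    have hgz0 := hg0 _ hz
    have hghz0 := hgh0 _ hz
    have hq : HasDerivAt (fun t => (g (c t) + h (c t)) / g (c t))
        (((g' (c s) * (q - p) + h' (c s) * (q - p)) * g (c s)
          - (g (c s) + h (c s)) * (g' (c s) * (q - p))) / (g (c s)) ^ 2) s :=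
      (hgz.add hhz).div hgz hgz0
    have hlog := hq.clog_real (hslit _ hz)
    have heq := aux_div (g (c s)) (h (c s)) (g' (c s)) (h' (c s)) (q - p) hgz0 hghz0
    rw [heq] at hlog
    exact hlog
  have hFTC : (∫ s in (0:ℝ)..1, (A s - B s)) = F 1 - F 0 :=
    intervalIntegral.integral_eq_sub_of_hasDerivAt hder (hAint.sub hBint)
  have hsplit : (∫ s in (0:ℝ)..1, A s) - (∫ s in (0:ℝ)..1, B s) = F 1 - F 0 := by
    rw [← intervalIntegral.integral_sub hAint hBint]; exact hFTC
  rw [hsplit]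
  have hc1 : c 1 = q := by simp [hc]
  have hc0 : c 0 = p := by simp [hc]
  have hq' : q ∈ segment ℝ p q := right_mem_segment ℝ p q
  have hp' : p ∈ segment ℝ p q := left_mem_segment ℝ p q
  have harg : ∀ z ∈ segment ℝ p q,
      |Complex.arg ((g z + h z) / g z)| < Real.pi / 2 := by
    intro z hz
    exact Complex.abs_arg_lt_pi_div_two_iff.mpr (Or.inl (hrepos z hz))
  have h1 := harg q hq'
  have h0 := harg p hp'
  have him : (F 1 - F 0).im
      = Complex.arg ((g q + h q) / g q) - Complex.arg ((g p + h p) / g p) := by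
    simp [hF, hc1, hc0, Complex.sub_im, Complex.log_im]
  rw [him]
  calc |Complex.arg ((g q + h q) / g q) - Complex.arg ((g p + h p) / g p)|
      ≤ |Complex.arg ((g q + h q) / g q)| + |Complex.arg ((g p + h p) / g p)| :=
        abs_sub _ _
    _ < Real.pi / 2 + Real.pi / 2 := by linarith
    _ = Real.pi := by ring
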